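/- The main method of the Hairer–Wanner embedded SDIRK scheme is A-stable: for every z ∈ ℂ with Re z ≤ 0, the matrix I − zA is invertible and the stability function R(z) = 1 + z · γ₁ᵀ (I − zA)⁻¹ 𝟙, where 𝟙 = (1,1,1,1,1)ᵀ, satisfies |R(z)| ≤ 1. -/

import Mathlib

open Matrix
set_option maxHeartbeats 2000000
noncomputable def hwA : Matrix (Fin 5) (Fin 5) ℂ :=
  !![1/4, 0, 0, 0, 0;
     1/2, 1/4, 0, 0, 0;
     17/50, -1/25, 1/4, 0, 0;
     371/1360, -137/2720, 15/544, 1/4, 0;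
     25/24, -49/48, 125/16, -85/12, 1/4]

noncomputable def hwγ₁ : Fin 5 → ℂ := ![25/24, -49/48, 125/16, -85/12, 1/4]

lemma hw_real_key (x y : ℝ) (hx : x ≤ 0) :
    16 * ((768 + 96*y^2 + 7*y^4 - 192*x - 24*x*y^2 - 96*x^2 - 42*x^2*y^2 + 8*x^3 + 7*x^4)^2
      + (-192*y - 8*y^3 - 192*x*y - 28*x*y^3 + 24*x^2*y + 28*x^3*y)^2)
    ≤ 9 * ((4 - x)^2 + y^2)^5 := by
  have hs : (0:ℝ) ≤ -x := by linarith
  have key : 9 * ((4 - x)^2 + y^2)^5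
      - 16 * ((768 + 96*y^2 + 7*y^4 - 192*x - 24*x*y^2 - 96*x^2 - 42*x^2*y^2 + 8*x^3 + 7*x^4)^2
        + (-192*y - 8*y^3 - 192*x*y - 28*x*y^3 + 24*x^2*y + 28*x^3*y)^2) =
      18874368 * (-x) +
      5898240 * (-x) * (y)^2 +
      657408 * (-x) * (y^2)^2 +
      24832 * (-x) * (y^3)^2 +
      360 * (-x) * (y^4)^2 +
      28311552 * (-x)^2 +
      5898240 * (-x)^2 * (y)^2 +
      321024 * (-x)^2 * (y^2)^2 +
      5504 * (-x)^2 * (y^3)^2 +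
      45 * (-x)^2 * (y^4)^2 +
      18481152 * (-x)^3 +
      2617344 * (-x)^3 * (y)^2 +
      120576 * (-x)^3 * (y^2)^2 +
      1440 * (-x)^3 * (y^3)^2 +
      7471104 * (-x)^4 +
      824832 * (-x)^4 * (y)^2 +
      16896 * (-x)^4 * (y^2)^2 +
      90 * (-x)^4 * (y^3)^2 +
      2254848 * (-x)^5 +
      166656 * (-x)^5 * (y)^2 +
      2160 * (-x)^5 * (y^2)^2 +
      504320 * (-x)^6 +
      17024 * (-x)^6 * (y)^2 +
      90 * (-x)^6 * (y^2)^2 +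
      70912 * (-x)^7 +
      1440 * (-x)^7 * (y)^2 +
      5696 * (-x)^8 +
      45 * (-x)^8 * (y)^2 +
      360 * (-x)^9 +
      9 * (-x)^10 +
      9 * (y^5 - 32/9*y^3)^2 +
      (3584/9) * (y^3)^2 := by ring
  have hterm : ∀ (c : ℝ) (a : ℕ), 0 ≤ c → 0 ≤ c * (-x)^a :=
    fun c a hc => mul_nonneg hc (pow_nonneg hs a)
  have htermy : ∀ (c : ℝ) (a : ℕ) (w : ℝ), 0 ≤ c → 0 ≤ c * (-x)^a * w^2 :=
    fun c a w hc => mul_nonneg (hterm c a hc) (sq_nonneg w)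
  nlinarith [hterm 18874368 1 (by norm_num), htermy 5898240 1 y (by norm_num),
    htermy 657408 1 (y^2) (by norm_num), htermy 24832 1 (y^3) (by norm_num),
    htermy 360 1 (y^4) (by norm_num), hterm 28311552 2 (by norm_num),
    htermy 5898240 2 y (by norm_num), htermy 321024 2 (y^2) (by norm_num),
    htermy 5504 2 (y^3) (by norm_num), htermy 45 2 (y^4) (by norm_num),
    hterm 18481152 3 (by norm_num), htermy 2617344 3 y (by norm_num),
    htermy 120576 3 (y^2) (by norm_num), htermy 1440 3 (y^3) (by norm_num),
    hterm 7471104 4 (by norm_num), htermy 824832 4 y (by norm_num),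
    htermy 16896 4 (y^2) (by norm_num), htermy 90 4 (y^3) (by norm_num),
    hterm 2254848 5 (by norm_num), htermy 166656 5 y (by norm_num),
    htermy 2160 5 (y^2) (by norm_num), hterm 504320 6 (by norm_num),
    htermy 17024 6 y (by norm_num), htermy 90 6 (y^2) (by norm_num),
    hterm 70912 7 (by norm_num), htermy 1440 7 y (by norm_num),
    hterm 5696 8 (by norm_num), htermy 45 8 y (by norm_num),
    hterm 360 9 (by norm_num), hterm 9 10 (by norm_num),
    sq_nonneg (y^5 - 32/9*y^3), sq_nonneg (y^3), key]

theorem hw_A_stable :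
    ∀ z : ℂ, z.re ≤ 0 →
      IsUnit (1 - z • hwA) ∧
      ‖1 + z * (hwγ₁ ⬝ᵥ ((1 - z • hwA)⁻¹ *ᵥ fun _ => 1))‖ ≤ 1 := by
  intro z hz
  have hd : (4 : ℂ) - z ≠ 0 := by
    intro h
    have hz4 : z = 4 := by linear_combination -h
    rw [hz4] at hz
    norm_num at hz
  have hd4 : (1 : ℂ) - z/4 ≠ 0 := by
    intro h
    exact hd (by linear_combination 4*h)
  have hdet : (1 - z • hwA).det = (1 - z/4)^5 := by
    rw [Matrix.det_of_lowerTriangular]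
    · simp [hwA, Fin.prod_univ_five, Matrix.one_apply]
      ring
    · intro i j hij
      have hij' : (i : Fin 5) < j := hij
      fin_cases i <;> fin_cases j <;>
        first
        | exact absurd hij' (by decide)
        | simp [hwA]
  have hdetu : IsUnit (1 - z • hwA).det := by
    rw [hdet]
    exact isUnit_iff_ne_zero.2 (pow_ne_zero 5 hd4)
  refine ⟨(Matrix.isUnit_iff_isUnit_det _).2 hdetu, ?_⟩
  have hD : ((4 : ℂ) - z)^5 ≠ 0 := pow_ne_zero 5 hd
  set r : Fin 5 → ℂ :=
    ![1024 - 1024*z + 384*z^2 - 64*z^3 + 4*z^4,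
      1024 - 512*z + 32*z^3 - 4*z^4,
      1024 - 3584/5*z + 3328/25*z^2 + 96/25*z^3 - 52/25*z^4,
      1024 - 768*z + 14848/85*z^2 - 672/85*z^3 - 16/17*z^4,
      1024 - 256*z - 128*z^2 + 32/3*z^3 + 28/3*z^4] with hrdef
  have hr : (1 - z • hwA) *ᵥ r = (fun _ => (4 - z)^5) := by
    funext i
    fin_cases i <;>
      simp [hrdef, hwA, Matrix.mulVec, dotProduct, Fin.sum_univ_five,
        Matrix.sub_apply, Matrix.smul_apply, Matrix.one_apply] <;>
      ring
  have hMu : (1 - z • hwA) *ᵥ ((((4 : ℂ) - z)^5)⁻¹ • r) = (fun _ => 1) := by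
    rw [Matrix.mulVec_smul, hr]
    funext i
    simp [inv_mul_cancel₀ hD]
  have hinv : (1 - z • hwA)⁻¹ *ᵥ (fun _ => (1:ℂ)) = (((4 : ℂ) - z)^5)⁻¹ • r := by
    conv_lhs => rw [← hMu]
    rw [Matrix.mulVec_mulVec, Matrix.nonsing_inv_mul _ hdetu, Matrix.one_mulVec]
  rw [hinv]
  have hDe : (((4 : ℂ) - z)^5)⁻¹ * ((4 : ℂ) - z)^5 = 1 := inv_mul_cancel₀ hD
  have h5 : (1024 - 256*z - 128*z^2 + 32/3*z^3 + 28/3*z^4 : ℂ)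
      - z * (25/24*(1024 - 1024*z + 384*z^2 - 64*z^3 + 4*z^4)
        + (-49/48)*(1024 - 512*z + 32*z^3 - 4*z^4)
        + 125/16*(1024 - 3584/5*z + 3328/25*z^2 + 96/25*z^3 - 52/25*z^4)
        + (-85/12)*(1024 - 768*z + 14848/85*z^2 - 672/85*z^3 - 16/17*z^4)
        + 1/4*(1024 - 256*z - 128*z^2 + 32/3*z^3 + 28/3*z^4)) = (4 - z)^5 := by
    ring
  have hval : 1 + z * (hwγ₁ ⬝ᵥ ((((4 : ℂ) - z)^5)⁻¹ • r)) =
      (1024 - 256*z - 128*z^2 + 32/3*z^3 + 28/3*z^4) * (((4 : ℂ) - z)^5)⁻¹ := by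
    simp only [hrdef, hwγ₁, dotProduct, Fin.sum_univ_five, Pi.smul_apply,
      smul_eq_mul, Matrix.cons_val_zero, Matrix.cons_val_one, Matrix.head_cons,
      Matrix.cons_val_two, Matrix.tail_cons, Matrix.cons_val_three, Matrix.cons_val_four,
      Matrix.cons_val', Matrix.empty_val', Matrix.cons_val_fin_one]
    linear_combination (-(((4 : ℂ) - z)^5)⁻¹) * h5 - hDe
  rw [hval, ← div_eq_mul_inv, norm_div]
  rw [div_le_one (norm_pos_iff.2 hD)]
  have hz' : z = (z.re : ℂ) + (z.im : ℂ) * Complex.I := (Complex.re_add_im z).symm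
  set x := z.re with hx
  set y := z.im with hy
  have e1 : Complex.normSq (1024 - 256*z - 128*z^2 + 32/3*z^3 + 28/3*z^4) =
      16/9 * ((768 + 96*y^2 + 7*y^4 - 192*x - 24*x*y^2 - 96*x^2 - 42*x^2*y^2 + 8*x^3 + 7*x^4)^2
        + (-192*y - 8*y^3 - 192*x*y - 28*x*y^3 + 24*x^2*y + 28*x^3*y)^2) := by
    rw [hz']
    simp [Complex.normSq_apply, Complex.add_re, Complex.add_im, Complex.mul_re,
      Complex.mul_im, Complex.sub_re, Complex.sub_im, pow_succ, pow_zero]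
    ring
  have e2 : Complex.normSq (((4 : ℂ) - z)^5) = ((4 - x)^2 + y^2)^5 := by
    rw [map_pow]
    have h4z : Complex.normSq (4 - z) = (4 - x)^2 + y^2 := by
      rw [hz']
      simp [Complex.normSq_apply, Complex.sub_re, Complex.sub_im]
      ring
    rw [h4z]
  have hkey := hw_real_key x y hz
  have hsq : ‖(1024 - 256*z - 128*z^2 + 32/3*z^3 + 28/3*z^4 : ℂ)‖^2
      ≤ ‖((4 : ℂ) - z)^5‖^2 := by
    rw [Complex.sq_norm, Complex.sq_norm, e1, e2]
    linarith
  have h1 := norm_nonneg (1024 - 256*z - 128*z^2 + 32/3*z^3 + 28/3*z^4 : ℂ)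
  have h2 := norm_nonneg (((4 : ℂ) - z)^5)
  nlinarith [hsq, h1, h2]
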